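/- Let a₁, …, a_N ∈ (0,1) be real numbers with ∑_{i=1}^N a_i = 1 and a_{N−1} + a_N ≥ ε for some ε ∈ (0,1). Then ∑_{j=1}^N a_j / (∑_{i≥j} a_i) ≤ ⌈log₂(1/ε)⌉ + 2. -/
import Mathlib


open scoped BigOperators

noncomputable section

/-- Sign of a Boolean bit, encoding `b ↦ (-1)^b ∈ {-1,1}`. -/
def sgn (x : Bool) : ℝ := if x then -1 else 1

/-- Expectation under the uniform distribution on a finite type. -/
def uexp {Ω : Type*} [Fintype Ω] (f : Ω → ℝ) : ℝ :=
  (∑ x, f x) / (Fintype.card Ω : ℝ)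

/-- The parity character `χ_S(x) = ∏_{i ∈ S} x_i` on the cube `{-1,1}^n`. -/
def chi {n : ℕ} (S : Finset (Fin n)) (x : Fin n → Bool) : ℝ :=
  ∏ i ∈ S, sgn (x i)

/-- Fourier coefficient `f̂(S) = E[f · χ_S]`. -/
def fCoeff {n : ℕ} (f : (Fin n → Bool) → ℝ) (S : Finset (Fin n)) : ℝ :=
  uexp (fun x => f x * chi S x)

open Classical in
/-- Fourier degree: the largest `|S|` with `f̂(S) ≠ 0`. -/
def fdeg {n : ℕ} (f : (Fin n → Bool) → ℝ) : ℕ :=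
  (Finset.univ.filter (fun S : Finset (Fin n) => fCoeff f S ≠ 0)).sup Finset.card

/-- A `d`-junta: a function depending on at most `d` coordinates. -/
def IsJunta {n : ℕ} (d : ℕ) (h : (Fin n → Bool) → ℝ) : Prop :=
  ∃ T : Finset (Fin n), T.card ≤ d ∧ ∀ x y, (∀ i ∈ T, x i = y i) → h x = h y

/-- A conical `d`-junta: a nonnegative combination of nonnegative `d`-juntas. -/
def IsConicalJunta {n : ℕ} (d : ℕ) (f : (Fin n → Bool) → ℝ) : Prop :=
  ∃ (N : ℕ) (c : Fin N → ℝ) (g : Fin N → (Fin n → Bool) → ℝ),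
    (∀ i, 0 ≤ c i) ∧ (∀ i x, 0 ≤ g i x) ∧ (∀ i, IsJunta d (g i)) ∧
    ∀ x, f x = ∑ i, c i * g i x

/-- Nonnegative degree `deg₊(f)`: least `d` such that `f` is a conical `d`-junta. -/
def degPlus {n : ℕ} (f : (Fin n → Bool) → ℝ) : ℕ :=
  sInf {d | IsConicalJunta d f}

/-- The (modified inner-product) gadget `g : {0,1}^b × {0,1}^b → {-1,1}`,
with output encoded as a Boolean exponent: `g(x,y) = x₁ ⊕ y₁ ⊕ (⊕ᵢ xᵢyᵢ)`. -/
def gadget {b : ℕ} (x y : Fin b → Bool) : Bool :=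
  decide (((∑ i : Fin b,
        (if x i then (1 : ZMod 2) else 0) * (if y i then (1 : ZMod 2) else 0))
    + (if h : 0 < b then
        (if x ⟨0, h⟩ then (1 : ZMod 2) else 0) + (if y ⟨0, h⟩ then (1 : ZMod 2) else 0)
      else 0)) = 1)

/-- `G = g^{⊗n}`, the gadget applied coordinatewise. -/
def gadgetN {n b : ℕ} (x y : Fin n → Fin b → Bool) : Fin n → Bool :=
  fun i => gadget (x i) (y i)

/-- The pattern matrix `M_f^b(x,y) = f(g^{⊗n}(x,y))`. -/
def patternMatrix {n : ℕ} (b : ℕ) (f : (Fin n → Bool) → ℝ) :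
    (Fin n → Fin b → Bool) → (Fin n → Fin b → Bool) → ℝ :=
  fun x y => f (gadgetN x y)

/-- Nonnegative rank: least `r` such that `M` is a sum of `r` nonnegative rank-1 matrices. -/
def nnRank {α β : Type*} [Fintype α] [Fintype β] (M : α → β → ℝ) : ℕ :=
  sInf {r | ∃ (u : Fin r → α → ℝ) (v : Fin r → β → ℝ),
    (∀ i a, 0 ≤ u i a) ∧ (∀ i b, 0 ≤ v i b) ∧ ∀ a b, M a b = ∑ i, u i a * v i b}

/-- Entrywise sup-norm of a matrix. -/
def supAbs {α β : Type*} [Fintype α] [Fintype β] (M : α → β → ℝ) : ℝ :=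
  ⨆ p : α × β, |M p.1 p.2|

/-- `ε`-approximate nonnegative rank. -/
def approxNNRank {α β : Type*} [Fintype α] [Fintype β] (ε : ℝ) (M : α → β → ℝ) : ℕ :=
  sInf {r | ∃ M' : α → β → ℝ, (∀ a b, 0 ≤ M' a b) ∧
    (∀ a b, |M' a b - M a b| ≤ ε * supAbs M) ∧ nnRank M' ≤ r}

/-- A density: nonnegative with expectation 1 under the uniform distribution. -/
def IsDensity {Ω : Type*} [Fintype Ω] (u : Ω → ℝ) : Prop :=
  (∀ x, 0 ≤ u x) ∧ uexp u = 1

/-- `Pr_{X ~ μ}[X ∈ S]` for a density `μ`. -/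
def prSet {Ω : Type*} [Fintype Ω] (μ : Ω → ℝ) (S : Finset Ω) : ℝ :=
  (∑ x ∈ S, μ x) / (Fintype.card Ω : ℝ)

/-- Min-entropy `H∞(u) = min_x log₂(|Ω| / u(x)) = -log₂ max_x Pr[X = x]`. -/
def minEntropy {Ω : Type*} [Fintype Ω] (u : Ω → ℝ) : ℝ :=
  - Real.logb 2 (⨆ x, u x / (Fintype.card Ω : ℝ))

open Classical in
/-- `Pr_{X ~ u}[X_I = y_I]`, the probability that the projection to `I` agrees with `y`. -/
def prMarg {n : ℕ} {α : Type*} [Fintype α] (u : (Fin n → α) → ℝ) (I : Finset (Fin n))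
    (y : Fin n → α) : ℝ :=
  (∑ x ∈ Finset.univ.filter (fun x : Fin n → α => ∀ i ∈ I, x i = y i), u x)
    / (Fintype.card (Fin n → α) : ℝ)

/-- Min-entropy of the projection `X_I` for `X ~ u`. -/
def projMinEntropy {n : ℕ} {α : Type*} [Fintype α] (u : (Fin n → α) → ℝ)
    (I : Finset (Fin n)) : ℝ :=
  - Real.logb 2 (⨆ y : Fin n → α, prMarg u I y)

/-- Blockwise-dense: every projection has min-entropy at least `0.8 |I| log₂ q`. -/
def IsBlockwiseDense {n : ℕ} {α : Type*} [Fintype α] (u : (Fin n → α) → ℝ) : Prop :=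
  ∀ I : Finset (Fin n),
    0.8 * (I.card : ℝ) * Real.logb 2 (Fintype.card α) ≤ projMinEntropy u I

/-- `d`-CBD with fixed set `I`: `X_I` is fixed and every disjoint projection is dense. -/
def IsCBDWith {n : ℕ} {α : Type*} [Fintype α] (d : ℝ) (I : Finset (Fin n))
    (u : (Fin n → α) → ℝ) : Prop :=
  (I.card : ℝ) ≤ d ∧ projMinEntropy u I = 0 ∧
  ∀ J : Finset (Fin n), Disjoint J I →
    0.8 * (J.card : ℝ) * Real.logb 2 (Fintype.card α) ≤ projMinEntropy u J

/-- `d`-CBD distribution. -/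
def IsCBD {n : ℕ} {α : Type*} [Fintype α] (d : ℝ) (u : (Fin n → α) → ℝ) : Prop :=
  ∃ I, IsCBDWith d I u

open Classical in
/-- `Acc_{u,v}`: the density on `{-1,1}^n` of `g^{⊗n}(X,Y)` for independent `X ~ u`, `Y ~ v`. -/
def AccFn {n b : ℕ} (u v : (Fin n → Fin b → Bool) → ℝ) (z : Fin n → Bool) : ℝ :=
  (2 : ℝ) ^ n * (∑ x : Fin n → Fin b → Bool, ∑ y : Fin n → Fin b → Bool,
      if gadgetN x y = z then u x * v y else 0)
    / (Fintype.card (Fin n → Fin b → Bool) : ℝ) ^ 2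

/-- `ε`-decaying function: mean zero with `|ĥ(S)| ≤ ε^{|S|}`. -/
def IsDecaying {n : ℕ} (ε : ℝ) (h : (Fin n → Bool) → ℝ) : Prop :=
  uexp h = 0 ∧ ∀ S : Finset (Fin n), |fCoeff h S| ≤ ε ^ S.card

/-- A `d`-conjunction, normalized to have expectation 1. -/
def IsConjunction {n : ℕ} (d : ℕ) (C : (Fin n → Bool) → ℝ) : Prop :=
  ∃ (I : Finset (Fin n)) (a : Fin n → Bool), I.card ≤ d ∧
    ∀ x, C x = 2 ^ I.card * (if ∀ i ∈ I, x i = a i then (1 : ℝ) else 0)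

/-- `(ε,δ)`-approximate conical `d`-junta. -/
def IsApproxConicalJunta {n : ℕ} (ε δ : ℝ) (d : ℕ) (f : (Fin n → Bool) → ℝ) : Prop :=
  ∃ (N : ℕ) (lam : Fin N → ℝ) (C h : Fin N → (Fin n → Bool) → ℝ)
    (γ : (Fin n → Bool) → ℝ),
    (∀ i, 0 ≤ lam i) ∧ (∑ i, lam i) ≤ 1 ∧
    (∀ i, IsConjunction d (C i)) ∧ (∀ i, IsDecaying ε (h i)) ∧
    (∀ x, 0 ≤ γ x) ∧ uexp γ ≤ δ ∧
    ∀ x, f x = (∑ i, lam i * C i x * (1 + h i x)) + γ x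

open Classical in
/-- The density `μ` conditioned on the event `S`. -/
def condDensity {Ω : Type*} [Fintype Ω] (μ : Ω → ℝ) (S : Finset Ω) : Ω → ℝ :=
  fun x => if x ∈ S then μ x / prSet μ S else 0

/-- First marginal density of a density on a product. -/
def margFst {Ω : Type*} [Fintype Ω] (μ : Ω × Ω → ℝ) : Ω → ℝ :=
  fun x => (∑ y, μ (x, y)) / (Fintype.card Ω : ℝ)

/-- Second marginal density of a density on a product. -/
def margSnd {Ω : Type*} [Fintype Ω] (μ : Ω × Ω → ℝ) : Ω → ℝ :=
  fun y => (∑ x, μ (x, y)) / (Fintype.card Ω : ℝ)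

open Classical in
/-- `Pr_{(X,Y) ~ μ}[X_I = y.1_I ∧ Y_I = y.2_I]`. -/
def prMarg2 {n : ℕ} {α : Type*} [Fintype α]
    (μ : (Fin n → α) × (Fin n → α) → ℝ) (I : Finset (Fin n))
    (y : (Fin n → α) × (Fin n → α)) : ℝ :=
  (∑ x ∈ Finset.univ.filter
      (fun x : (Fin n → α) × (Fin n → α) =>
        (∀ i ∈ I, x.1 i = y.1 i) ∧ (∀ i ∈ I, x.2 i = y.2 i)), μ x)
    / (Fintype.card ((Fin n → α) × (Fin n → α)) : ℝ)

/-- Min-entropy of the projection `μ_I` of a density on a product, projecting both factors. -/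
def projMinEntropy2 {n : ℕ} {α : Type*} [Fintype α]
    (μ : (Fin n → α) × (Fin n → α) → ℝ) (I : Finset (Fin n)) : ℝ :=
  - Real.logb 2 (⨆ y : (Fin n → α) × (Fin n → α), prMarg2 μ I y)

/-- the elementary estimate on sums of ratios to tail sums. -/
theorem stmt15 (N : ℕ) (hN : 2 ≤ N) (a : ℕ → ℝ) (ε : ℝ) (hε0 : 0 < ε) (hε1 : ε < 1)
    (ha : ∀ i ∈ Finset.Icc 1 N, 0 < a i ∧ a i < 1)
    (hsum : (∑ i ∈ Finset.Icc 1 N, a i) = 1)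
    (htail : ε ≤ a (N - 1) + a N) :
    (∑ j ∈ Finset.Icc 1 N, a j / (∑ i ∈ Finset.Icc j N, a i))
      ≤ (⌈Real.logb 2 (1 / ε)⌉ : ℝ) + 2 := by
  set T : ℕ → ℝ := fun j => ∑ i ∈ Finset.Icc j N, a i with hT
  have Tpos : ∀ j, 1 ≤ j → j ≤ N → 0 < T j := by
    intro j h1 h2
    apply Finset.sum_pos
    · intro i hi
      exact (ha i (by simp only [Finset.mem_Icc] at hi ⊢; omega)).1
    · exact ⟨j, by simp [Finset.mem_Icc]; omega⟩
  have Tstep : ∀ j, j ≤ N → T j = a j + T (j + 1) := by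
    intro j hj
    have : Finset.Icc j N = insert j (Finset.Icc (j + 1) N) := by
      ext i; simp [Finset.mem_Icc]; omega
    simp only [hT]
    rw [this, Finset.sum_insert (by simp only [Finset.mem_Icc]; omega)]
  have Ttop : T (N + 1) = 0 := by
    simp [hT, Finset.Icc_eq_empty_of_lt (by omega : N < N + 1)]
  -- telescoping claim
  have key : ∀ m, m + 1 ≤ N →
      (∑ j ∈ Finset.Icc 1 m, a j / T j) ≤ Real.log (T 1) - Real.log (T (m + 1)) := by
    intro m
    induction m with
    | zero => intro _; simp
    | succ m ih =>
      intro hm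
      have ihm := ih (by omega)
      rw [Finset.sum_Icc_succ_top (by omega : 1 ≤ m + 1)]
      have h1 : 0 < T (m + 1) := Tpos _ (by omega) (by omega)
      have h2 : 0 < T (m + 2) := Tpos _ (by omega) (by omega)
      have hstep : a (m + 1) / T (m + 1) ≤ Real.log (T (m + 1)) - Real.log (T (m + 2)) := by
        have ha1 : a (m + 1) = T (m + 1) - T (m + 2) := by
          have := Tstep (m + 1) (by omega); linarith
        have hlog := Real.log_le_sub_one_of_pos (div_pos h2 h1)
        rw [Real.log_div h2.ne' h1.ne'] at hlog
        rw [ha1, sub_div, div_self h1.ne']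
        have : T (m + 2) / T (m + 1) ≥ 1 + (Real.log (T (m + 2)) - Real.log (T (m + 1))) := by
          linarith
        linarith
      linarith
  have hkey := key (N - 2) (by omega)
  have hN2 : N - 2 + 1 = N - 1 := by omega
  have hN1 : N - 1 + 1 = N := by omega
  rw [hN2] at hkey
  -- split off the last two terms
  have hsplit : (∑ j ∈ Finset.Icc 1 N, a j / T j)
      = (∑ j ∈ Finset.Icc 1 (N - 2), a j / T j) + a (N - 1) / T (N - 1) + a N / T N := by
    rw [show N = (N - 1) + 1 by omega, Finset.sum_Icc_succ_top (by omega : 1 ≤ N - 1 + 1)]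
    rw [show N - 1 = (N - 2) + 1 by omega, Finset.sum_Icc_succ_top (by omega : 1 ≤ N - 2 + 1)]
    congr 2
  have hT1 : T 1 = 1 := hsum
  have hTN : T N = a N := by have := Tstep N le_rfl; rw [Ttop] at this; linarith
  have hTN1 : T (N - 1) = a (N - 1) + a N := by
    have := Tstep (N - 1) (by omega); rw [hN1, hTN] at this; exact this
  have haN : 0 < a N := (ha N (by simp [Finset.mem_Icc]; omega)).1
  have haN1 : 0 < a (N - 1) := (ha (N - 1) (by simp [Finset.mem_Icc]; omega)).1
  have hlast : a N / T N = 1 := by rw [hTN, div_self haN.ne']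
  have hsnd : a (N - 1) / T (N - 1) ≤ 1 := by
    rw [div_le_one (Tpos _ (by omega) (by omega))]; rw [hTN1]; linarith
  have hTN1eps : ε ≤ T (N - 1) := by rw [hTN1]; exact htail
  have hlogbound : Real.log (T 1) - Real.log (T (N - 1)) ≤ Real.logb 2 (1 / ε) := by
    rw [hT1, Real.log_one, zero_sub]
    have h1 : -Real.log (T (N - 1)) ≤ -Real.log ε :=
      neg_le_neg (Real.log_le_log hε0 hTN1eps)
    have h2 : -Real.log ε = Real.log (1 / ε) := by
      rw [Real.log_div one_ne_zero hε0.ne', Real.log_one]; ring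
    have h3 : (1 : ℝ) ≤ 1 / ε := by rw [le_div_iff₀ hε0]; linarith
    have h4 : Real.log (1 / ε) ≤ Real.logb 2 (1 / ε) := by
      rw [Real.logb, le_div_iff₀ (Real.log_pos one_lt_two)]
      nlinarith [Real.log_nonneg h3, Real.log_two_lt_d9]
    linarith
  have hceil : Real.logb 2 (1 / ε) ≤ (⌈Real.logb 2 (1 / ε)⌉ : ℝ) := Int.le_ceil _
  calc (∑ j ∈ Finset.Icc 1 N, a j / T j)
      = (∑ j ∈ Finset.Icc 1 (N - 2), a j / T j) + a (N - 1) / T (N - 1) + a N / T N := hsplit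
    _ ≤ (Real.log (T 1) - Real.log (T (N - 1))) + 1 + 1 := by
        rw [hlast]; linarith
    _ ≤ (⌈Real.logb 2 (1 / ε)⌉ : ℝ) + 2 := by linarith
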